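/- Let 𝔉 be a non-empty hereditary formation and H a subgroup of a finite group G. Then H is 𝔉-subnormal in G if and only if H = G, or H·G^𝔉 is a proper subgroup of G and H is 𝔉-subnormal in H·G^𝔉. -/

import Mathlib

/-! Common definitions: chief factors, G-isomorphism of chief factors, chief factor
functions, the class `C(f)`, classes of finite groups, formations, residuals,
relative centralizers, internal direct products, minimal normal subgroups,
(K-)𝔉-subnormality. -/

/-- Conjugate of an element of a normal subgroup, as an element of the subgroup. -/
def normalConj {G : Type} [Group G] {H : Subgroup G} (hH : H.Normal) (g : G) (x : ↥H) : ↥H :=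
  ⟨g * ↑x * g⁻¹, hH.conj_mem ↑x x.2 g⟩

/-- `H/K` is a chief factor of `G`: both are normal in `G`, `K < H`, and no normal
subgroup of `G` lies strictly between them. -/
def IsChiefFactor (G : Type) [Group G] (H K : Subgroup G) : Prop :=
  H.Normal ∧ K.Normal ∧ K < H ∧
    ∀ L : Subgroup G, L.Normal → K < L → L < H → False

/-- The factors `H/K` and `M/N` are `G`-isomorphic (auxiliary version taking normality
proofs): there is a group isomorphism `φ : H/K ≃* M/N` commuting with the conjugation
action of `G` on both factors. -/
def GIsoAux (G : Type) [Group G] (H K M N : Subgroup G)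
    (hH : H.Normal) (hK : K.Normal) (hM : M.Normal) (hN : N.Normal) : Prop :=
  haveI := hK.subgroupOf H
  haveI := hN.subgroupOf M
  ∃ φ : (↥H ⧸ K.subgroupOf H) ≃* (↥M ⧸ N.subgroupOf M),
    ∀ (g : G) (x : ↥H) (y : ↥M),
      φ (QuotientGroup.mk x) = QuotientGroup.mk y →
        φ (QuotientGroup.mk (normalConj hH g x)) = QuotientGroup.mk (normalConj hM g y)

/-- The factors `H/K` and `M/N` are `G`-isomorphic. -/
def IsGIsomorphicFactors (G : Type) [Group G] (H K M N : Subgroup G) : Prop :=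
  ∃ (hH : H.Normal) (hK : K.Normal) (hM : M.Normal) (hN : N.Normal),
    GIsoAux G H K M N hH hK hM hN

/-- The type of functions assigning a Boolean value (`true` = 1, `false` = 0) to each
finite group `G` and pair of subgroups `H`, `K` (thought of as the factor `H/K`). -/
abbrev ChiefFactorFun : Type 1 :=
  ∀ (G : Type) [Group G] [Finite G], Subgroup G → Subgroup G → Bool

/-- `f` is a chief factor function: it is invariant under `G`-isomorphism of chief
factors and compatible with quotients. -/
structure IsChiefFactorFun (f : ChiefFactorFun) : Prop where
  iso_inv : ∀ (G : Type) [Group G] [Finite G] (H K M N : Subgroup G),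
    IsChiefFactor G H K → IsChiefFactor G M N → IsGIsomorphicFactors G H K M N →
      f G H K = f G M N
  quot_inv : ∀ (G : Type) [Group G] [Finite G] (H K N : Subgroup G) [N.Normal],
    IsChiefFactor G H K → N ≤ K →
      f G H K = f (G ⧸ N) (H.map (QuotientGroup.mk' N)) (K.map (QuotientGroup.mk' N))

/-- `G ∈ C(f)`: every chief factor of `G` has value 1 under `f`. -/
def CClass (f : ChiefFactorFun) (G : Type) [Group G] [Finite G] : Prop :=
  ∀ H K : Subgroup G, IsChiefFactor G H K → f G H K = true

/-- `G/L ∈ C(f)`, for a normal subgroup `L` of `G`. -/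
def CClassQuot (f : ChiefFactorFun) (G : Type) [Group G] [Finite G]
    (L : Subgroup G) (hL : L.Normal) : Prop :=
  haveI := hL
  CClass f (G ⧸ L)

open scoped commutatorElement

/-- The centralizer `C_G(H/K) = {g : G | [g,h] ∈ K for all h ∈ H}` of the factor
`H/K` in `G` (for `K` normal in `G`). -/
def relCentralizer {G : Type} [Group G] (H K : Subgroup G) (hK : K.Normal) : Subgroup G where
  carrier := {g : G | ∀ x ∈ H, ⁅g, x⁆ ∈ K}
  one_mem' := by
    intro x hx
    have h1 : ⁅(1 : G), x⁆ = 1 := by group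
    rw [h1]; exact K.one_mem
  mul_mem' := by
    intro a b ha hb x hx
    have h1 : ⁅a * b, x⁆ = a * ⁅b, x⁆ * a⁻¹ * ⁅a, x⁆ := by group
    rw [h1]
    exact K.mul_mem (hK.conj_mem _ (hb x hx) a) (ha x hx)
  inv_mem' := by
    intro a ha x hx
    have h1 : ⁅a⁻¹, x⁆ = a⁻¹ * ⁅a, x⁆⁻¹ * a⁻¹⁻¹ := by group
    rw [h1]
    exact hK.conj_mem _ (K.inv_mem (ha x hx)) a⁻¹

/-- A class of finite groups, given as a predicate on finite group types. -/
abbrev GroupClass : Type 1 := ∀ (G : Type) [Group G] [Finite G], Prop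

/-- The class `𝔛` is non-empty. -/
def GroupClassNonempty (𝔛 : GroupClass) : Prop :=
  ∃ (G : Type) (g : Group G) (f : Finite G), @𝔛 G g f

/-- `G/L ∈ 𝔛`, for a normal subgroup `L` of `G`. -/
def QuotientIn (𝔛 : GroupClass) (G : Type) [Group G] [Finite G]
    (L : Subgroup G) (hL : L.Normal) : Prop :=
  haveI := hL
  𝔛 (G ⧸ L)

/-- `𝔛` is a formation: a class of finite groups (closed under isomorphism) which is
closed under taking quotients and under subdirect products. -/
structure IsFormation (𝔛 : GroupClass) : Prop where
  iso_closed : ∀ (G : Type) [Group G] [Finite G] (H : Type) [Group H] [Finite H],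
    (G ≃* H) → 𝔛 G → 𝔛 H
  quot_closed : ∀ (G : Type) [Group G] [Finite G] (N : Subgroup G) [N.Normal],
    𝔛 G → 𝔛 (G ⧸ N)
  subdirect_closed : ∀ (G : Type) [Group G] [Finite G] (N M : Subgroup G)
    [N.Normal] [M.Normal], N ⊓ M = ⊥ → 𝔛 (G ⧸ N) → 𝔛 (G ⧸ M) → 𝔛 G

/-- `𝔛` is hereditary: closed under taking subgroups. -/
def IsHereditary (𝔛 : GroupClass) : Prop :=
  ∀ (G : Type) [Group G] [Finite G], 𝔛 G → ∀ H : Subgroup G, 𝔛 ↥H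

/-- `R` is the `𝔛`-residual of `G`: the smallest normal subgroup of `G` whose
quotient lies in `𝔛`. -/
def IsResidual (𝔛 : GroupClass) (G : Type) [Group G] [Finite G] (R : Subgroup G) : Prop :=
  ∃ hR : R.Normal, QuotientIn 𝔛 G R hR ∧
    ∀ (L : Subgroup G) (hL : L.Normal), QuotientIn 𝔛 G L hL → R ≤ L

/-- `A` is the internal direct product of the family of subgroups `B i`: each `B i`
is a subgroup of `A` normal in `A`, together they generate `A`, and each of them
intersects the subgroup generated by the others trivially. -/
def IsInternalDirectProduct {G : Type} [Group G] (A : Subgroup G)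
    {ι : Type} (B : ι → Subgroup G) : Prop :=
  (∀ i, B i ≤ A) ∧ (∀ i, ((B i).subgroupOf A).Normal) ∧ (⨆ i, B i) = A ∧
    ∀ i, B i ⊓ (⨆ (j) (_ : j ≠ i), B j) = ⊥

/-- A non-abelian simple group. -/
def IsNonabelianSimple (S : Type) [Group S] : Prop :=
  IsSimpleGroup S ∧ ∃ x y : S, x * y ≠ y * x

/-- `A` is a minimal normal subgroup of `G`. -/
def IsMinimalNormal {G : Type} [Group G] (A : Subgroup G) : Prop :=
  A.Normal ∧ A ≠ ⊥ ∧ ∀ B : Subgroup G, B.Normal → B ≤ A → B ≠ ⊥ → B = A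

/-- `H` is a subnormal subgroup of `G`. -/
def IsSubnormal (G : Type) [Group G] (H : Subgroup G) : Prop :=
  ∃ (n : ℕ) (c : ℕ → Subgroup G), c 0 = H ∧ c n = ⊤ ∧
    ∀ i < n, c i ≤ c (i + 1) ∧ ((c i).subgroupOf (c (i + 1))).Normal

/-- One step in a K-`𝔉`-subnormal chain: `A ≤ B`, and either `A` is normal in `B` or
`B / Core_B(A) ∈ 𝔉`. -/
def KFStep (𝔛 : GroupClass) {G : Type} [Group G] [Finite G] (A B : Subgroup G) : Prop :=
  A ≤ B ∧ ((A.subgroupOf B).Normal ∨ 𝔛 (↥B ⧸ (A.subgroupOf B).normalCore))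

/-- `H` is a K-`𝔉`-subnormal subgroup of `G`. -/
def IsKFSubnormal (𝔛 : GroupClass) (G : Type) [Group G] [Finite G] (H : Subgroup G) : Prop :=
  ∃ (n : ℕ) (c : ℕ → Subgroup G), c 0 = H ∧ c n = ⊤ ∧
    ∀ i < n, KFStep 𝔛 (c i) (c (i + 1))

/-- One step in an `𝔉`-subnormal chain (for hereditary `𝔉`): `A < B` and
`B / Core_B(A) ∈ 𝔉`. -/
def FStep (𝔛 : GroupClass) {G : Type} [Group G] [Finite G] (A B : Subgroup G) : Prop :=
  A < B ∧ 𝔛 (↥B ⧸ (A.subgroupOf B).normalCore)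

/-- `H` is an `𝔉`-subnormal subgroup of `G` (for hereditary `𝔉`). -/
def IsFSubnormal (𝔛 : GroupClass) (G : Type) [Group G] [Finite G] (H : Subgroup G) : Prop :=
  H = ⊤ ∨ ∃ (n : ℕ) (c : ℕ → Subgroup G), c 0 = H ∧ c n = ⊤ ∧
    ∀ i < n, FStep 𝔛 (c i) (c (i + 1))


section Stmt18Helpers

variable {𝔉 : GroupClass}

private lemma stmt18_mem_of_injective (hform : IsFormation 𝔉) (hhered : IsHereditary 𝔉)
    {X Y : Type} [Group X] [Finite X] [Group Y] [Finite Y]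
    (f : X →* Y) (hf : Function.Injective f) (hY : 𝔉 Y) : 𝔉 X :=
  hform.iso_closed _ _ (MonoidHom.ofInjective hf).symm (hhered Y hY f.range)

private lemma stmt18_mem_quot_of_le (hform : IsFormation 𝔉)
    {X : Type} [Group X] [Finite X] {N M : Subgroup X}
    [hN : N.Normal] [hM : M.Normal] (h : N ≤ M) (hX : 𝔉 (X ⧸ N)) : 𝔉 (X ⧸ M) := by
  haveI : (M.map (QuotientGroup.mk' N)).Normal :=
    Subgroup.Normal.map hM _ (QuotientGroup.mk'_surjective N)
  exact hform.iso_closed _ _ (QuotientGroup.quotientQuotientEquivQuotient N M h)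
    (hform.quot_closed _ _ hX)

private lemma stmt18_quot_core (hform : IsFormation 𝔉) (hhered : IsHereditary 𝔉)
    {X Y : Type} [Group X] [Finite X] [Group Y] [Finite Y]
    (φ : X →* Y) (hY : 𝔉 Y) (S : Subgroup X) (hk : φ.ker ≤ S) :
    𝔉 (X ⧸ S.normalCore) := by
  have h1 : 𝔉 (X ⧸ φ.ker) :=
    stmt18_mem_of_injective hform hhered (QuotientGroup.kerLift φ)
      (QuotientGroup.kerLift_injective φ) hY
  exact stmt18_mem_quot_of_le hform (Subgroup.normal_le_normalCore.mpr hk) h1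

private lemma stmt18_fstep_subgroupOf (hform : IsFormation 𝔉) (hhered : IsHereditary 𝔉)
    {G : Type} [Group G] [Finite G] {A B : Subgroup G} (K : Subgroup G)
    (h : FStep 𝔉 A B) :
    A.subgroupOf K ≤ B.subgroupOf K ∧
      𝔉 (↥(B.subgroupOf K) ⧸ ((A.subgroupOf K).subgroupOf (B.subgroupOf K)).normalCore) := by
  refine ⟨Subgroup.comap_mono h.1.le, ?_⟩
  let incl : ↥(B.subgroupOf K) →* ↥B :=
    { toFun := fun x => ⟨((x : ↥K) : G), Subgroup.mem_subgroupOf.mp x.2⟩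
      map_one' := rfl
      map_mul' := fun _ _ => rfl }
  let D := (A.subgroupOf B).normalCore
  let φ := (QuotientGroup.mk' D).comp incl
  apply stmt18_quot_core hform hhered φ h.2
  intro x hx
  have hx1 : incl x ∈ D := by
    rw [MonoidHom.mem_ker, MonoidHom.comp_apply, QuotientGroup.mk'_apply,
      QuotientGroup.eq_one_iff] at hx
    exact hx
  have hx2 : incl x ∈ A.subgroupOf B := Subgroup.normalCore_le _ hx1
  exact Subgroup.mem_subgroupOf.mpr (Subgroup.mem_subgroupOf.mpr
    (Subgroup.mem_subgroupOf.mp hx2))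

private lemma stmt18_fstep_map_subtype (hform : IsFormation 𝔉) (hhered : IsHereditary 𝔉)
    {G : Type} [Group G] [Finite G] {K : Subgroup G}
    {A B : Subgroup ↥K} (h : FStep 𝔉 A B) :
    FStep 𝔉 (A.map K.subtype) (B.map K.subtype) := by
  have hinj : Function.Injective K.subtype := K.subtype_injective
  have hKle : B.map K.subtype ≤ K := by
    rintro g ⟨b, _, rfl⟩
    exact (b : ↥K).2
  have hBmem : ∀ y : ↥(B.map K.subtype), (⟨(y : G), hKle y.2⟩ : ↥K) ∈ B := by
    rintro ⟨g, hg⟩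
    obtain ⟨b, hb, rfl⟩ := hg
    simpa using hb
  constructor
  · exact lt_of_le_of_ne (Subgroup.map_mono h.1.le)
      (fun he => h.1.ne (Subgroup.map_injective hinj he))
  · let incl : ↥(B.map K.subtype) →* ↥B :=
      { toFun := fun y => ⟨⟨(y : G), hKle y.2⟩, hBmem y⟩
        map_one' := rfl
        map_mul' := fun _ _ => rfl }
    let D := (A.subgroupOf B).normalCore
    let φ := (QuotientGroup.mk' D).comp incl
    apply stmt18_quot_core hform hhered φ h.2
    intro y hy
    have hy1 : incl y ∈ D := by
      rw [MonoidHom.mem_ker, MonoidHom.comp_apply, QuotientGroup.mk'_apply,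
        QuotientGroup.eq_one_iff] at hy
      exact hy
    have hy2 : incl y ∈ A.subgroupOf B := Subgroup.normalCore_le _ hy1
    have hy3 : (⟨(y : G), hKle y.2⟩ : ↥K) ∈ A := Subgroup.mem_subgroupOf.mp hy2
    exact Subgroup.mem_subgroupOf.mpr ⟨⟨(y : G), hKle y.2⟩, hy3, rfl⟩

private lemma stmt18_fstep_top (hform : IsFormation 𝔉) (hhered : IsHereditary 𝔉)
    {G : Type} [Group G] [Finite G] {R A : Subgroup G}
    (hR : IsResidual 𝔉 G R) (hRA : R ≤ A) (hA : A ≠ ⊤) : FStep 𝔉 A (⊤ : Subgroup G) := by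
  obtain ⟨hRn, hq, _⟩ := hR
  haveI := hRn
  refine ⟨lt_top_iff_ne_top.mpr hA, ?_⟩
  let φ : ↥(⊤ : Subgroup G) →* G ⧸ R :=
    (QuotientGroup.mk' R).comp (Subgroup.topEquiv (G := G)).toMonoidHom
  apply stmt18_quot_core hform hhered φ hq
  intro x hx
  have hx1 : ((x : G)) ∈ R := by
    rw [MonoidHom.mem_ker, MonoidHom.comp_apply, QuotientGroup.mk'_apply,
      QuotientGroup.eq_one_iff] at hx
    exact hx
  exact Subgroup.mem_subgroupOf.mpr (hRA hx1)

private lemma stmt18_residual_le (hform : IsFormation 𝔉)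
    {G : Type} [Group G] [Finite G] {R A : Subgroup G}
    (hR : IsResidual 𝔉 G R) (h : FStep 𝔉 A (⊤ : Subgroup G)) : R ≤ A := by
  obtain ⟨hRn, _, hmin⟩ := hR
  set C := (A.subgroupOf (⊤ : Subgroup G)).normalCore with hC
  set L := C.map (⊤ : Subgroup G).subtype with hLdef
  have hsur : Function.Surjective (⊤ : Subgroup G).subtype :=
    fun g => ⟨⟨g, Subgroup.mem_top g⟩, rfl⟩
  have hLn : L.Normal := (Subgroup.normalCore_normal _).map _ hsur
  haveI := hLn
  have hmapeq : C.map (Subgroup.topEquiv (G := G)).toMonoidHom = L := by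
    rfl
  have hiso : (↥(⊤ : Subgroup G) ⧸ C) ≃* (G ⧸ L) :=
    QuotientGroup.congr C L (Subgroup.topEquiv (G := G)) hmapeq
  have hL : QuotientIn 𝔉 G L hLn := hform.iso_closed _ _ hiso h.2
  have hRL : R ≤ L := hmin L hLn hL
  refine hRL.trans ?_
  rintro g ⟨x, hx, rfl⟩
  exact Subgroup.mem_subgroupOf.mp (Subgroup.normalCore_le _ hx)

private lemma stmt18_prepend {G : Type} [Group G] [Finite G] {A B : Subgroup G}
    (hst : FStep 𝔉 A B) (h : IsFSubnormal 𝔉 G B) : IsFSubnormal 𝔉 G A := by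
  rcases h with h | ⟨m, c, hc0, hcm, hstep⟩
  · subst h
    refine Or.inr ⟨1, fun i => if i = 0 then A else ⊤, rfl, rfl, ?_⟩
    intro i hi
    have : i = 0 := by omega
    subst this
    simpa using hst
  · refine Or.inr ⟨m + 1, fun i => if i = 0 then A else c (i - 1), rfl, by simpa using hcm, ?_⟩
    intro i hi
    rcases Nat.eq_zero_or_pos i with h0 | h0
    · subst h0
      simpa [hc0] using hst
    · obtain ⟨j, rfl⟩ : ∃ j, i = j + 1 := ⟨i - 1, by omega⟩
      simpa using hstep j (by omega)

private lemma stmt18_chain_fsub {G : Type} [Group G] [Finite G] :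
    ∀ (n : ℕ) (c : ℕ → Subgroup G),
      (∀ i < n, c i = c (i + 1) ∨ FStep 𝔉 (c i) (c (i + 1))) →
      IsFSubnormal 𝔉 G (c n) → IsFSubnormal 𝔉 G (c 0) := by
  intro n
  induction n with
  | zero => exact fun c _ h => h
  | succ m ih =>
    intro c hs hn
    have h1 : IsFSubnormal 𝔉 G (c 1) :=
      ih (fun i => c (i + 1)) (fun i hi => hs (i + 1) (by omega)) hn
    rcases hs 0 (by omega) with he | hst
    · rwa [he]
    · exact stmt18_prepend hst h1

end Stmt18Helpers

/-- Let `𝔉` be a non-empty hereditary formation, `G` a finite group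
with `𝔉`-residual `R = G^𝔉`, and `H ≤ G`. Then `H` is `𝔉`-subnormal in `G` iff
`H = G`, or `H⬝G^𝔉 < G` and `H` is `𝔉`-subnormal in `H⬝G^𝔉`. -/

theorem stmt18 (𝔉 : GroupClass) (hform : IsFormation 𝔉) (hhered : IsHereditary 𝔉)
    (hne : GroupClassNonempty 𝔉)
    (G : Type) [Group G] [Finite G] (H : Subgroup G)
    (R : Subgroup G) (hR : IsResidual 𝔉 G R) :
    IsFSubnormal 𝔉 G H ↔
      (H = ⊤ ∨
        (H ⊔ R < ⊤ ∧ IsFSubnormal 𝔉 ↥(H ⊔ R) (H.subgroupOf (H ⊔ R)))) := by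
  constructor
  · intro h
    rcases h with h | ⟨n, c, hc0, hcn, hstep⟩
    · exact Or.inl h
    by_cases hH : H = ⊤
    · exact Or.inl hH
    right
    have hn : n ≠ 0 := by
      rintro rfl
      exact hH (hc0.symm.trans hcn)
    obtain ⟨m, rfl⟩ : ∃ m, n = m + 1 := ⟨n - 1, by omega⟩
    have hlast := hstep m (by omega)
    rw [hcn] at hlast
    have hRcm : R ≤ c m := stmt18_residual_le hform hR hlast
    have hmono : ∀ i, i ≤ m → c 0 ≤ c i := by
      intro i hi
      induction i with
      | zero => exact le_rfl
      | succ k ihk => exact (ihk (by omega)).trans (hstep k (by omega)).1.le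
    have hHcm : H ≤ c m := hc0 ▸ hmono m le_rfl
    have hJle : H ⊔ R ≤ c m := sup_le hHcm hRcm
    have hJlt : H ⊔ R < ⊤ := lt_of_le_of_lt hJle hlast.1
    refine ⟨hJlt, ?_⟩
    have hmain := stmt18_chain_fsub (𝔉 := 𝔉) (m + 1)
      (fun i => (c i).subgroupOf (H ⊔ R)) ?_ ?_
    · rwa [hc0] at hmain
    · intro i hi
      obtain ⟨hle, hmem⟩ := stmt18_fstep_subgroupOf hform hhered (H ⊔ R) (hstep i hi)
      by_cases heq : (c i).subgroupOf (H ⊔ R) = (c (i + 1)).subgroupOf (H ⊔ R)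
      · exact Or.inl heq
      · exact Or.inr ⟨lt_of_le_of_ne hle heq, hmem⟩
    · show IsFSubnormal 𝔉 ↥(H ⊔ R) ((c (m + 1)).subgroupOf (H ⊔ R))
      rw [hcn, Subgroup.top_subgroupOf]
      exact Or.inl rfl
  · rintro (h | ⟨hlt, hsub⟩)
    · exact Or.inl h
    have hHJ : H ≤ H ⊔ R := le_sup_left
    have hRJ : R ≤ H ⊔ R := le_sup_right
    have hJfs : IsFSubnormal 𝔉 G (H ⊔ R) :=
      stmt18_prepend (stmt18_fstep_top hform hhered hR hRJ hlt.ne) (Or.inl rfl)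
    rcases hsub with htop | ⟨m, d, hd0, hdm, hdstep⟩
    · have hHeq : H = H ⊔ R := le_antisymm hHJ (Subgroup.subgroupOf_eq_top.mp htop)
      rw [hHeq]
      exact hJfs
    · have hmain := stmt18_chain_fsub (𝔉 := 𝔉) m
        (fun i => (d i).map (H ⊔ R).subtype) ?_ ?_
      · rw [hd0, Subgroup.subgroupOf_map_subtype, inf_eq_left.mpr hHJ] at hmain
        exact hmain
      · intro i hi
        exact Or.inr (stmt18_fstep_map_subtype hform hhered (hdstep i hi))
      · show IsFSubnormal 𝔉 G ((d m).map (H ⊔ R).subtype)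
        rw [hdm, ← MonoidHom.range_eq_map, Subgroup.range_subtype]
        exact hJfs
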